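/- Let d ≥ 4 and t = −1/(d−1). Define A₁,…,A_d ∈ M_d(ℂ) by (A_m)_{mm} = t, (A_m)_{jk} = 0 when exactly one of j,k equals m, (A_m)_{jj} = (3−d)/(d−1) for j ≠ m, and (A_m)_{jk} = 2/(d−1) for j ≠ k with j,k ≠ m. Then: (a) the family {A_m²}_{m=1}^d is linearly independent over ℂ; and (b) for every choice of pairwise distinct indices j, k, m, n ∈ {1,…,d}: [A_j,A_k] + [A_k,A_m] + [A_m,A_j] = 0; [A_j,A_k] + [A_k,A_m] + [A_m,A_n] + [A_n,A_j] = 0; {A_j,A_k} − {A_k,A_m} + {A_m,A_n} − {A_n,A_j} = 0; and (A_j − A_m)(A_k − A_n) = 0. In particular each of the families {A_m A_n + A_n A_m}_{m<n} and {A_m A_n − A_n A_m}_{m<n} is linearly dependent. -/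

import Mathlib

open Matrix

noncomputable section

/-- The key-example matrices: `(A_m)_{mm} = t`, `(A_m)_{jk} = 0` when exactly one of
`j,k` equals `m`, `(A_m)_{jj} = (3−d)/(d−1)` for `j ≠ m`, and `(A_m)_{jk} = 2/(d−1)` for
`j ≠ k` with `j,k ≠ m`. -/
def keyMatrix (d : ℕ) (t : ℝ) (m : Fin d) : Matrix (Fin d) (Fin d) ℂ :=
  Matrix.of fun j k =>
    if j = m ∧ k = m then (t : ℂ)
    else if j = m ∨ k = m then 0
    else if j = k then (((3 - (d : ℝ)) / ((d : ℝ) - 1) : ℝ) : ℂ)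
    else (((2 : ℝ) / ((d : ℝ) - 1) : ℝ) : ℂ)

namespace KeyAux

def χ (d : ℕ) (a p : Fin d) : ℂ := if p = a then 1 else 0

def bb (d : ℕ) : ℂ := 2 / ((d : ℂ) - 1)

def ss (d : ℕ) : ℂ := ((d : ℂ) - 2) / ((d : ℂ) - 1)

lemma hdC {d : ℕ} (hd : 4 ≤ d) : ((d : ℂ) - 1) ≠ 0 := by
  have : (d : ℂ) ≠ 1 := by exact_mod_cast (by omega : d ≠ 1)
  exact sub_ne_zero.2 this

lemma hdR {d : ℕ} (hd : 4 ≤ d) : ((d : ℝ) - 1) ≠ 0 := by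
  have : (d : ℝ) ≠ 1 := by exact_mod_cast (by omega : d ≠ 1)
  exact sub_ne_zero.2 this

lemma apply_eq {d : ℕ} (hd : 4 ≤ d) {t : ℝ} (ht : t = -1 / ((d : ℝ) - 1)) (m p q : Fin d) :
    keyMatrix d t m p q =
      bb d * (1 - χ d m p) * (1 - χ d m q) + ss d * χ d m p * χ d m q
        - (if p = q then 1 else 0) := by
  have h1 := hdC hd
  have h2 := hdR hd
  subst ht
  by_cases hp : p = m <;> by_cases hq : q = m
  · subst hp; subst hq
    simp only [keyMatrix, Matrix.of_apply, χ, bb, ss, if_pos rfl, and_self]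
    push_cast
    field_simp
    ring
  · have hpq : p ≠ q := fun h => hq (h ▸ hp)
    have hmq : ¬ m = q := fun h => hq h.symm
    simp [keyMatrix, χ, hp, hq, hpq, hmq]
  · have hpq : p ≠ q := fun h => hp (h.symm ▸ hq)
    simp [keyMatrix, χ, hp, hq, hpq]
  · by_cases hpq : p = q
    · subst hpq
      simp [keyMatrix, χ, hp, bb, ss]
      field_simp
      ring
    · simp [keyMatrix, χ, hp, hq, hpq, bb]


variable {d : ℕ}

lemma sum_one : ∑ _r : Fin d, (1 : ℂ) = d := by simp

lemma sum_chi (a : Fin d) : ∑ r, χ d a r = 1 := by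
  simp [χ, Finset.sum_ite_eq']

lemma sum_chichi (a c : Fin d) : ∑ r, χ d a r * χ d c r = if a = c then 1 else 0 := by
  simp only [χ, ite_mul, one_mul, zero_mul]
  rw [Finset.sum_ite_eq' Finset.univ a (fun r => if r = c then (1:ℂ) else 0)]
  simp

lemma sum_f_delta (f : Fin d → ℂ) (q : Fin d) :
    ∑ r, f r * (if r = q then 1 else 0) = f q := by
  simp only [mul_ite, mul_one, mul_zero]
  rw [Finset.sum_ite_eq' Finset.univ q f]
  simp

lemma sum_delta_f (f : Fin d → ℂ) (p : Fin d) :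
    ∑ r, (if p = r then 1 else 0) * f r = f p := by
  simp only [ite_mul, one_mul, zero_mul]
  rw [Finset.sum_ite_eq Finset.univ p f]
  simp

lemma Sgg (j k : Fin d) :
    ∑ r, (1 - χ d j r) * (1 - χ d k r) = (d : ℂ) - 2 + (if j = k then 1 else 0) := by
  have h : ∀ r : Fin d, (1 - χ d j r) * (1 - χ d k r)
      = 1 - χ d j r - χ d k r + χ d j r * χ d k r := fun r => by ring
  rw [Finset.sum_congr rfl fun r _ => h r]
  rw [Finset.sum_add_distrib, Finset.sum_sub_distrib, Finset.sum_sub_distrib,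
    sum_one, sum_chi, sum_chi, sum_chichi]
  ring

lemma Sge (j k : Fin d) :
    ∑ r, (1 - χ d j r) * χ d k r = 1 - (if j = k then 1 else 0) := by
  have h : ∀ r : Fin d, (1 - χ d j r) * χ d k r
      = χ d k r - χ d j r * χ d k r := fun r => by ring
  rw [Finset.sum_congr rfl fun r _ => h r]
  rw [Finset.sum_sub_distrib, sum_chi, sum_chichi]

lemma Seg (j k : Fin d) :
    ∑ r, χ d j r * (1 - χ d k r) = 1 - (if j = k then 1 else 0) := by
  have h : ∀ r : Fin d, χ d j r * (1 - χ d k r)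
      = χ d j r - χ d j r * χ d k r := fun r => by ring
  rw [Finset.sum_congr rfl fun r _ => h r]
  rw [Finset.sum_sub_distrib, sum_chi, sum_chichi]

lemma key_mul (hd : 4 ≤ d) {t : ℝ} (ht : t = -1 / ((d : ℝ) - 1)) (j k p q : Fin d) :
    (keyMatrix d t j * keyMatrix d t k) p q =
      bb d ^ 2 * ((d : ℂ) - 2 + (if j = k then 1 else 0)) * ((1 - χ d j p) * (1 - χ d k q))
      + bb d * ss d * (1 - (if j = k then 1 else 0)) *
          ((1 - χ d j p) * χ d k q + χ d j p * (1 - χ d k q))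
      + ss d ^ 2 * (if j = k then 1 else 0) * (χ d j p * χ d k q)
      - (bb d * (1 - χ d j p) * (1 - χ d j q) + ss d * χ d j p * χ d j q)
      - (bb d * (1 - χ d k p) * (1 - χ d k q) + ss d * χ d k p * χ d k q)
      + (if p = q then 1 else 0) := by
  rw [Matrix.mul_apply]
  have hsum : ∀ r : Fin d, keyMatrix d t j p r * keyMatrix d t k r q =
      (bb d ^ 2 * ((1 - χ d j p) * (1 - χ d k q))) * ((1 - χ d j r) * (1 - χ d k r))
      + ((bb d * ss d * ((1 - χ d j p) * χ d k q)) * ((1 - χ d j r) * χ d k r)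
      + ((bb d * ss d * (χ d j p * (1 - χ d k q))) * (χ d j r * (1 - χ d k r))
      + (ss d ^ 2 * (χ d j p * χ d k q)) * (χ d j r * χ d k r)))
      - (bb d * (1 - χ d j p) * (1 - χ d j r) + ss d * χ d j p * χ d j r)
          * (if r = q then 1 else 0)
      - (if p = r then 1 else 0)
          * ((bb d * (1 - χ d k r) * (1 - χ d k q) + ss d * χ d k r * χ d k q)
              - (if r = q then 1 else 0)) := by
    intro r
    rw [apply_eq hd ht, apply_eq hd ht]
    ring
  rw [Finset.sum_congr rfl fun r _ => hsum r]
  rw [Finset.sum_sub_distrib, Finset.sum_sub_distrib, Finset.sum_add_distrib,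
    Finset.sum_add_distrib, Finset.sum_add_distrib,
    ← Finset.mul_sum, ← Finset.mul_sum, ← Finset.mul_sum, ← Finset.mul_sum,
    Sgg, Sge, Seg, sum_chichi,
    sum_f_delta (fun r => bb d * (1 - χ d j p) * (1 - χ d j r) + ss d * χ d j p * χ d j r) q,
    sum_delta_f (fun r => (bb d * (1 - χ d k r) * (1 - χ d k q) + ss d * χ d k r * χ d k q)
      - (if r = q then 1 else 0)) p]
  ring


lemma key_mul_self (hd : 4 ≤ d) {t : ℝ} (ht : t = -1 / ((d : ℝ) - 1)) (m p q : Fin d) :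
    (keyMatrix d t m * keyMatrix d t m) p q =
      (ss d ^ 2 - 2 * ss d) * (χ d m p * χ d m q) + (if p = q then 1 else 0) := by
  rw [key_mul hd ht]
  have h1 := hdC hd
  simp only [if_pos rfl, ↓reduceIte]
  generalize (if p = q then (1:ℂ) else 0) = Z
  generalize χ d m p = a1
  generalize χ d m q = a2
  simp only [bb, ss]
  field_simp
  ring

lemma hrel (hd : 4 ≤ d) : bb d ^ 2 * ((d : ℂ) - 2) = 2 * (bb d * ss d) := by
  have h1 := hdC hd
  simp only [bb, ss]
  field_simp

lemma ident3 (hd : 4 ≤ d) {t : ℝ} (ht : t = -1 / ((d : ℝ) - 1)) {j k m : Fin d}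
    (hjk : j ≠ k) (hjm : j ≠ m) (hkm : k ≠ m) :
    (keyMatrix d t j * keyMatrix d t k - keyMatrix d t k * keyMatrix d t j) +
      (keyMatrix d t k * keyMatrix d t m - keyMatrix d t m * keyMatrix d t k) +
      (keyMatrix d t m * keyMatrix d t j - keyMatrix d t j * keyMatrix d t m) = 0 := by
  ext p q
  have h1 := hdC hd
  simp only [Matrix.add_apply, Matrix.sub_apply, Matrix.zero_apply]
  rw [key_mul hd ht j k, key_mul hd ht k j, key_mul hd ht k m, key_mul hd ht m k,
    key_mul hd ht m j, key_mul hd ht j m]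
  simp only [if_neg hjk, if_neg hjk.symm, if_neg hjm, if_neg hjm.symm,
    if_neg hkm, if_neg hkm.symm]
  generalize (if p = q then (1:ℂ) else 0) = Z
  generalize χ d j p = a1
  generalize χ d j q = a2
  generalize χ d k p = a3
  generalize χ d k q = a4
  generalize χ d m p = a5
  generalize χ d m q = a6
  linear_combination (a1*a4 - a3*a2 + a3*a6 - a5*a4 + a5*a2 - a1*a6) * hrel hd

lemma ident4 (hd : 4 ≤ d) {t : ℝ} (ht : t = -1 / ((d : ℝ) - 1)) {j k m n : Fin d}
    (hjk : j ≠ k) (hjm : j ≠ m) (hjn : j ≠ n) (hkm : k ≠ m) (hkn : k ≠ n) (hmn : m ≠ n) :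
    (keyMatrix d t j * keyMatrix d t k - keyMatrix d t k * keyMatrix d t j) +
      (keyMatrix d t k * keyMatrix d t m - keyMatrix d t m * keyMatrix d t k) +
      (keyMatrix d t m * keyMatrix d t n - keyMatrix d t n * keyMatrix d t m) +
      (keyMatrix d t n * keyMatrix d t j - keyMatrix d t j * keyMatrix d t n) = 0 := by
  ext p q
  have h1 := hdC hd
  simp only [Matrix.add_apply, Matrix.sub_apply, Matrix.zero_apply]
  rw [key_mul hd ht j k, key_mul hd ht k j, key_mul hd ht k m, key_mul hd ht m k,
    key_mul hd ht m n, key_mul hd ht n m, key_mul hd ht n j, key_mul hd ht j n]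
  simp only [if_neg hjk, if_neg hjk.symm, if_neg hjm, if_neg hjm.symm, if_neg hjn,
    if_neg hjn.symm, if_neg hkm, if_neg hkm.symm, if_neg hkn, if_neg hkn.symm,
    if_neg hmn, if_neg hmn.symm]
  generalize (if p = q then (1:ℂ) else 0) = Z
  generalize χ d j p = a1
  generalize χ d j q = a2
  generalize χ d k p = a3
  generalize χ d k q = a4
  generalize χ d m p = a5
  generalize χ d m q = a6
  generalize χ d n p = a7
  generalize χ d n q = a8
  linear_combination (a1*a4 - a3*a2 + a3*a6 - a5*a4 + a5*a8 - a7*a6 + a7*a2 - a1*a8) * hrel hd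

lemma ident4anti (hd : 4 ≤ d) {t : ℝ} (ht : t = -1 / ((d : ℝ) - 1)) {j k m n : Fin d}
    (hjk : j ≠ k) (hjm : j ≠ m) (hjn : j ≠ n) (hkm : k ≠ m) (hkn : k ≠ n) (hmn : m ≠ n) :
    (keyMatrix d t j * keyMatrix d t k + keyMatrix d t k * keyMatrix d t j) -
      (keyMatrix d t k * keyMatrix d t m + keyMatrix d t m * keyMatrix d t k) +
      (keyMatrix d t m * keyMatrix d t n + keyMatrix d t n * keyMatrix d t m) -
      (keyMatrix d t n * keyMatrix d t j + keyMatrix d t j * keyMatrix d t n) = 0 := by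
  ext p q
  have h1 := hdC hd
  simp only [Matrix.add_apply, Matrix.sub_apply, Matrix.zero_apply]
  rw [key_mul hd ht j k, key_mul hd ht k j, key_mul hd ht k m, key_mul hd ht m k,
    key_mul hd ht m n, key_mul hd ht n m, key_mul hd ht n j, key_mul hd ht j n]
  simp only [if_neg hjk, if_neg hjk.symm, if_neg hjm, if_neg hjm.symm, if_neg hjn,
    if_neg hjn.symm, if_neg hkm, if_neg hkm.symm, if_neg hkn, if_neg hkn.symm,
    if_neg hmn, if_neg hmn.symm]
  generalize (if p = q then (1:ℂ) else 0) = Z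
  generalize χ d j p = a1
  generalize χ d j q = a2
  generalize χ d k p = a3
  generalize χ d k q = a4
  generalize χ d m p = a5
  generalize χ d m q = a6
  generalize χ d n p = a7
  generalize χ d n q = a8
  linear_combination (a1*a4 + a3*a2 - a3*a6 - a5*a4 + a5*a8 + a7*a6 - a7*a2 - a1*a8) * hrel hd

lemma identprod (hd : 4 ≤ d) {t : ℝ} (ht : t = -1 / ((d : ℝ) - 1)) {j k m n : Fin d}
    (hjk : j ≠ k) (hjm : j ≠ m) (hjn : j ≠ n) (hkm : k ≠ m) (hkn : k ≠ n) (hmn : m ≠ n) :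
    (keyMatrix d t j - keyMatrix d t m) * (keyMatrix d t k - keyMatrix d t n) = 0 := by
  rw [sub_mul, mul_sub, mul_sub]
  ext p q
  have h1 := hdC hd
  simp only [Matrix.sub_apply, Matrix.zero_apply]
  rw [key_mul hd ht j k, key_mul hd ht j n, key_mul hd ht m k, key_mul hd ht m n]
  simp only [if_neg hjk, if_neg hjn, if_neg hkm.symm, if_neg hmn]
  generalize (if p = q then (1:ℂ) else 0) = Z
  generalize χ d j p = a1
  generalize χ d j q = a2
  generalize χ d k p = a3
  generalize χ d k q = a4
  generalize χ d m p = a5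
  generalize χ d m q = a6
  generalize χ d n p = a7
  generalize χ d n q = a8
  linear_combination ((a1 - a5) * (a4 - a8)) * hrel hd


lemma cast_ne (hd : 4 ≤ d) : ((d : ℂ) ^ 2 - 3 * d + 3) ≠ 0 := by
  have h : (d ^ 2 + 3 : ℕ) ≠ 3 * d := by nlinarith
  have h2 : ((d ^ 2 + 3 : ℕ) : ℂ) ≠ ((3 * d : ℕ) : ℂ) := by exact_mod_cast h
  have h3 : (d : ℂ) ^ 2 - 3 * d + 3 = ((d ^ 2 + 3 : ℕ) : ℂ) - ((3 * d : ℕ) : ℂ) := by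
    push_cast; ring
  rw [h3]
  exact sub_ne_zero.2 h2

lemma c_ne_zero (hd : 4 ≤ d) : ss d ^ 2 - 2 * ss d ≠ 0 := by
  have h1 := hdC hd
  have hd0 : (d : ℂ) ≠ 0 := by exact_mod_cast (by omega : d ≠ 0)
  have hd2 : (d : ℂ) - 2 ≠ 0 :=
    sub_ne_zero.2 (by exact_mod_cast (by omega : d ≠ 2))
  have he : ss d ^ 2 - 2 * ss d = -((d : ℂ) * ((d : ℂ) - 2)) / (((d : ℂ) - 1) ^ 2) := by
    simp only [ss]; field_simp; ring
  rw [he]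
  exact div_ne_zero (neg_ne_zero.2 (mul_ne_zero hd0 hd2)) (pow_ne_zero _ h1)

lemma cd_ne_zero (hd : 4 ≤ d) : ss d ^ 2 - 2 * ss d + (d : ℂ) ≠ 0 := by
  have h1 := hdC hd
  have hd0 : (d : ℂ) ≠ 0 := by exact_mod_cast (by omega : d ≠ 0)
  have he : ss d ^ 2 - 2 * ss d + (d : ℂ)
      = (d : ℂ) * ((d : ℂ) ^ 2 - 3 * d + 3) / (((d : ℂ) - 1) ^ 2) := by
    simp only [ss]; field_simp; ring
  rw [he]
  exact div_ne_zero (mul_ne_zero hd0 (cast_ne hd)) (pow_ne_zero _ h1)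

lemma sq_linIndep (hd : 4 ≤ d) {t : ℝ} (ht : t = -1 / ((d : ℝ) - 1)) :
    LinearIndependent ℂ (fun m : Fin d => keyMatrix d t m * keyMatrix d t m) := by
  rw [Fintype.linearIndependent_iff]
  intro g hg
  have hkey : ∀ m : Fin d, (ss d ^ 2 - 2 * ss d) * g m + (∑ i, g i) = 0 := by
    intro m
    have h : (∑ i : Fin d, g i • (keyMatrix d t i * keyMatrix d t i)) m m = 0 := by
      rw [hg]; rfl
    rw [Matrix.sum_apply] at h
    simp only [Matrix.smul_apply, smul_eq_mul] at h
    have e : ∀ i : Fin d, g i * ((keyMatrix d t i * keyMatrix d t i) m m)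
        = (ss d ^ 2 - 2 * ss d) * (if m = i then g i else 0) + g i := by
      intro i
      rw [key_mul_self hd ht]
      simp only [χ, if_pos rfl]
      by_cases h' : m = i
      · simp [h']; ring
      · simp [h']
    rw [Finset.sum_congr rfl fun i _ => e i, Finset.sum_add_distrib, ← Finset.mul_sum,
      Finset.sum_ite_eq Finset.univ m g] at h
    simpa using h
  have hT : (∑ i, g i) = 0 := by
    have h3 : ∑ m : Fin d, ((ss d ^ 2 - 2 * ss d) * g m + (∑ i, g i)) = 0 := by
      rw [Finset.sum_congr rfl fun m _ => hkey m]; simp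
    rw [Finset.sum_add_distrib, ← Finset.mul_sum, Finset.sum_const, Finset.card_univ,
      Fintype.card_fin, nsmul_eq_mul] at h3
    have h4 : (ss d ^ 2 - 2 * ss d + (d : ℂ)) * (∑ i, g i) = 0 := by
      linear_combination h3
    rcases mul_eq_zero.1 h4 with h5 | h5
    · exact absurd h5 (cd_ne_zero hd)
    · exact h5
  intro m
  have h6 := hkey m
  rw [hT, add_zero] at h6
  rcases mul_eq_zero.1 h6 with h5 | h5
  · exact absurd h5 (c_ne_zero hd)
  · exact h5


lemma not_li_of_rel3 {ι : Type*} [Fintype ι] [DecidableEq ι]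
    (v : ι → Matrix (Fin d) (Fin d) ℂ) (a b c : ι) (hab : a ≠ b) (hac : a ≠ c)
    (h : v a + v b - v c = 0) : ¬ LinearIndependent ℂ v := by
  intro hli
  rw [Fintype.linearIndependent_iff] at hli
  have h1 := hli (fun P => (if P = a then 1 else 0) + (if P = b then 1 else 0)
      - (if P = c then 1 else 0)) ?_ a
  · simp only [if_pos rfl, if_neg hab, if_neg hac] at h1
    norm_num at h1
  · simp only [sub_smul, add_smul, ite_smul, one_smul, zero_smul]
    rw [Finset.sum_sub_distrib, Finset.sum_add_distrib]
    rw [Finset.sum_ite_eq' Finset.univ a, Finset.sum_ite_eq' Finset.univ b,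
      Finset.sum_ite_eq' Finset.univ c]
    simp only [Finset.mem_univ, if_pos]
    exact h

lemma not_li_of_rel4 {ι : Type*} [Fintype ι] [DecidableEq ι]
    (v : ι → Matrix (Fin d) (Fin d) ℂ) (a b c e : ι) (hab : a ≠ b) (hac : a ≠ c)
    (hae : a ≠ e) (h : v a - v b + v c - v e = 0) : ¬ LinearIndependent ℂ v := by
  intro hli
  rw [Fintype.linearIndependent_iff] at hli
  have h1 := hli (fun P => (if P = a then 1 else 0) - (if P = b then 1 else 0)
      + (if P = c then 1 else 0) - (if P = e then 1 else 0)) ?_ a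
  · simp only [if_pos rfl, if_neg hab, if_neg hac, if_neg hae] at h1
    norm_num at h1
  · simp only [sub_smul, add_smul, ite_smul, one_smul, zero_smul]
    rw [Finset.sum_sub_distrib, Finset.sum_add_distrib, Finset.sum_sub_distrib]
    rw [Finset.sum_ite_eq' Finset.univ a, Finset.sum_ite_eq' Finset.univ b,
      Finset.sum_ite_eq' Finset.univ c, Finset.sum_ite_eq' Finset.univ e]
    simp only [Finset.mem_univ, if_pos]
    exact h

lemma not_li_anti (hd : 4 ≤ d) {t : ℝ} (ht : t = -1 / ((d : ℝ) - 1)) :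
    ¬ LinearIndependent ℂ (fun p : {p : Fin d × Fin d // p.1 < p.2} =>
      keyMatrix d t p.1.1 * keyMatrix d t p.1.2 + keyMatrix d t p.1.2 * keyMatrix d t p.1.1) := by
  refine not_li_of_rel4 _
    (⟨(⟨0, by omega⟩, ⟨1, by omega⟩), Fin.mk_lt_mk.2 (by omega)⟩ :
      {p : Fin d × Fin d // p.1 < p.2})
    ⟨(⟨1, by omega⟩, ⟨2, by omega⟩), Fin.mk_lt_mk.2 (by omega)⟩
    ⟨(⟨2, by omega⟩, ⟨3, by omega⟩), Fin.mk_lt_mk.2 (by omega)⟩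
    ⟨(⟨0, by omega⟩, ⟨3, by omega⟩), Fin.mk_lt_mk.2 (by omega)⟩
    (by simp [Subtype.ext_iff, Prod.ext_iff, Fin.ext_iff])
    (by simp [Subtype.ext_iff, Prod.ext_iff, Fin.ext_iff])
    (by simp [Subtype.ext_iff, Prod.ext_iff, Fin.ext_iff]) ?_
  have H := ident4anti (j := (⟨0, by omega⟩ : Fin d)) (k := ⟨1, by omega⟩)
    (m := ⟨2, by omega⟩) (n := ⟨3, by omega⟩) hd ht
    (by simp [Fin.ext_iff]) (by simp [Fin.ext_iff]) (by simp [Fin.ext_iff])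
    (by simp [Fin.ext_iff]) (by simp [Fin.ext_iff]) (by simp [Fin.ext_iff])
  rw [← H]
  abel

lemma not_li_comm (hd : 4 ≤ d) {t : ℝ} (ht : t = -1 / ((d : ℝ) - 1)) :
    ¬ LinearIndependent ℂ (fun p : {p : Fin d × Fin d // p.1 < p.2} =>
      keyMatrix d t p.1.1 * keyMatrix d t p.1.2 - keyMatrix d t p.1.2 * keyMatrix d t p.1.1) := by
  refine not_li_of_rel3 _
    (⟨(⟨0, by omega⟩, ⟨1, by omega⟩), Fin.mk_lt_mk.2 (by omega)⟩ :
      {p : Fin d × Fin d // p.1 < p.2})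
    ⟨(⟨1, by omega⟩, ⟨2, by omega⟩), Fin.mk_lt_mk.2 (by omega)⟩
    ⟨(⟨0, by omega⟩, ⟨2, by omega⟩), Fin.mk_lt_mk.2 (by omega)⟩
    (by simp [Subtype.ext_iff, Prod.ext_iff, Fin.ext_iff])
    (by simp [Subtype.ext_iff, Prod.ext_iff, Fin.ext_iff]) ?_
  have H := ident3 (j := (⟨0, by omega⟩ : Fin d)) (k := ⟨1, by omega⟩)
    (m := ⟨2, by omega⟩) hd ht
    (by simp [Fin.ext_iff]) (by simp [Fin.ext_iff]) (by simp [Fin.ext_iff])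
  rw [← H]
  abel

end KeyAux

/-- For `d ≥ 4` and `t = −1/(d−1)`: (a) the squares `{A_m²}` are linearly independent;
(b) for pairwise distinct `j,k,m,n` the stated commutator, anti-commutator and product
identities hold; consequently each of the families `{A_m A_n + A_n A_m}_{m<n}` and
`{A_m A_n − A_n A_m}_{m<n}` is linearly dependent. -/
theorem keyMatrix_special_t_relations (d : ℕ) (hd : 4 ≤ d) (t : ℝ)
    (ht : t = -1 / ((d : ℝ) - 1)) :
    LinearIndependent ℂ (fun m : Fin d => keyMatrix d t m * keyMatrix d t m) ∧
    (∀ j k m n : Fin d, j ≠ k → j ≠ m → j ≠ n → k ≠ m → k ≠ n → m ≠ n →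
      ((keyMatrix d t j * keyMatrix d t k - keyMatrix d t k * keyMatrix d t j) +
        (keyMatrix d t k * keyMatrix d t m - keyMatrix d t m * keyMatrix d t k) +
        (keyMatrix d t m * keyMatrix d t j - keyMatrix d t j * keyMatrix d t m) = 0 ∧
      (keyMatrix d t j * keyMatrix d t k - keyMatrix d t k * keyMatrix d t j) +
        (keyMatrix d t k * keyMatrix d t m - keyMatrix d t m * keyMatrix d t k) +
        (keyMatrix d t m * keyMatrix d t n - keyMatrix d t n * keyMatrix d t m) +
        (keyMatrix d t n * keyMatrix d t j - keyMatrix d t j * keyMatrix d t n) = 0 ∧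
      (keyMatrix d t j * keyMatrix d t k + keyMatrix d t k * keyMatrix d t j) -
        (keyMatrix d t k * keyMatrix d t m + keyMatrix d t m * keyMatrix d t k) +
        (keyMatrix d t m * keyMatrix d t n + keyMatrix d t n * keyMatrix d t m) -
        (keyMatrix d t n * keyMatrix d t j + keyMatrix d t j * keyMatrix d t n) = 0 ∧
      (keyMatrix d t j - keyMatrix d t m) * (keyMatrix d t k - keyMatrix d t n) = 0)) ∧
    ¬ LinearIndependent ℂ (fun p : {p : Fin d × Fin d // p.1 < p.2} =>
      keyMatrix d t p.1.1 * keyMatrix d t p.1.2 + keyMatrix d t p.1.2 * keyMatrix d t p.1.1) ∧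
    ¬ LinearIndependent ℂ (fun p : {p : Fin d × Fin d // p.1 < p.2} =>
      keyMatrix d t p.1.1 * keyMatrix d t p.1.2 - keyMatrix d t p.1.2 * keyMatrix d t p.1.1) := by
  refine ⟨KeyAux.sq_linIndep hd ht, ?_, KeyAux.not_li_anti hd ht, KeyAux.not_li_comm hd ht⟩
  intro j k m n hjk hjm hjn hkm hkn hmn
  exact ⟨KeyAux.ident3 hd ht hjk hjm hkm, KeyAux.ident4 hd ht hjk hjm hjn hkm hkn hmn,
    KeyAux.ident4anti hd ht hjk hjm hjn hkm hkn hmn,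
    KeyAux.identprod hd ht hjk hjm hjn hkm hkn hmn⟩

end
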